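/- For n ≥ 3 firms, for all sufficiently small ε > 0, Δ(h(0) - ε, 0) > 0; equivalently, a firm producing 0 has a strict relative payoff advantage against n-1 firms each producing h(0) - ε. -/
import Mathlib


/-- Relative payoff difference of a single deviation from a symmetric profile. -/
noncomputable def Delta (n : ℕ) (p c : ℝ → ℝ) (q q' : ℝ) : ℝ :=
  p (q' + ((n : ℝ) - 1) * q) * (q' - q) + c q - c q'

/-- For `n ≥ 3` firms, for all sufficiently small `ε > 0` we have `Δ(h(0) - ε, 0) > 0`:
a firm producing `0` enjoys a strict relative payoff advantage against `n - 1` firms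
each producing `h(0) - ε`. -/
theorem Delta_pos_near_h0
    (n : ℕ) (hn : 3 ≤ n) (Qmax : ℝ) (hQmax : 0 < Qmax)
    (p c : ℝ → ℝ)
    (hp : StrictAntiOn p (Set.Icc 0 Qmax))
    (hpQ : ∀ Q : ℝ, Qmax ≤ Q → p Q = 0)
    (hpnn : ∀ Q : ℝ, 0 ≤ Q → 0 ≤ p Q)
    (hcd : Differentiable ℝ c) (hc' : Monotone (deriv c))
    (qW h0 : ℝ) (hqW : 0 < qW) (hWh : qW < h0) (hhQ : h0 < Qmax)
    (hh0 : p h0 * h0 - c h0 + c 0 = 0) :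
    ∃ ε0 > (0:ℝ), ∀ ε : ℝ, 0 < ε → ε < ε0 → 0 < Delta n p c (h0 - ε) 0 := by
  have hh0pos : 0 < h0 := lt_trans hqW hWh
  -- general antitonicity of p on [0, ∞)
  have panti : ∀ x y : ℝ, 0 ≤ x → x ≤ y → p y ≤ p x := by
    intro x y hx hxy
    by_cases hy : y ≤ Qmax
    · exact (hp.antitoneOn ⟨hx, le_trans hxy hy⟩ ⟨le_trans hx hxy, hy⟩ hxy)
    · rw [hpQ y (le_of_not_ge hy)]
      exact hpnn x hx
  have pstrict : ∀ x y : ℝ, 0 ≤ x → x < y → x < Qmax → p y < p x := by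
    intro x y hx hxy hxQ
    by_cases hy : y ≤ Qmax
    · exact hp ⟨hx, le_of_lt hxQ⟩ ⟨le_trans hx (le_of_lt hxy), hy⟩ hxy
    · rw [hpQ y (le_of_not_ge hy)]
      have : p Qmax < p x := hp ⟨hx, le_of_lt hxQ⟩ ⟨le_of_lt hQmax, le_refl _⟩ hxQ
      rwa [hpQ Qmax le_rfl] at this
  obtain ⟨M, hM0, hMle⟩ : ∃ M : ℝ, 0 ≤ M ∧ deriv c h0 ≤ M :=
    ⟨max (deriv c h0) 0, le_max_right _ _, le_max_left _ _⟩
  obtain ⟨K, hKpos, hKle⟩ : ∃ K : ℝ, 0 < K ∧ p (3 / 2 * h0) ≤ p h0 - K := by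
    refine ⟨p h0 - p (3 / 2 * h0), ?_, by linarith⟩
    have := pstrict h0 (3 / 2 * h0) (le_of_lt hh0pos) (by nlinarith) hhQ
    linarith
  refine ⟨min (h0 / 4) (K * h0 / (2 * (M + 1))), ?_, ?_⟩
  · apply lt_min
    · linarith
    · positivity
  intro ε hε hεlt
  have hε1 : ε < h0 / 4 := lt_of_lt_of_le hεlt (min_le_left _ _)
  have hε2 : ε < K * h0 / (2 * (M + 1)) := lt_of_lt_of_le hεlt (min_le_right _ _)
  have hq : 0 < h0 - ε := by linarith
  set Q : ℝ := ((n : ℝ) - 1) * (h0 - ε) with hQdef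
  have hn3 : (3 : ℝ) ≤ (n : ℝ) := by exact_mod_cast hn
  have hQge : 3 / 2 * h0 ≤ Q := by
    have h2 : (2 : ℝ) ≤ (n : ℝ) - 1 := by linarith
    have : 2 * (h0 - ε) ≤ Q := by nlinarith
    nlinarith
  have hpQle : p Q ≤ p h0 - K :=
    le_trans (panti (3 / 2 * h0) Q (by nlinarith) hQge) hKle
  -- MVT bound: c h0 - c (h0 - ε) ≤ ε * M
  have hmvt : c h0 - c (h0 - ε) ≤ ε * M := by
    obtain ⟨ξ, hξ, hderiv⟩ := exists_deriv_eq_slope c (by linarith : h0 - ε < h0)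
      hcd.continuous.continuousOn hcd.differentiableOn
    have hξle : deriv c ξ ≤ M := le_trans (hc' (le_of_lt hξ.2)) hMle
    have hs : (c h0 - c (h0 - ε)) / (h0 - (h0 - ε)) ≤ M := hderiv ▸ hξle
    have h' : h0 - (h0 - ε) = ε := by ring
    rw [h', div_le_iff₀ hε] at hs
    linarith [hs]
  have hph0 : 0 ≤ p h0 := hpnn h0 (le_of_lt hh0pos)
  have hpQval : p Q * (h0 - ε) ≤ (p h0 - K) * (h0 - ε) :=
    mul_le_mul_of_nonneg_right hpQle (le_of_lt hq)
  have hεM : ε * M < K * h0 / 2 := by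
    have h1 : ε * (2 * (M + 1)) < K * h0 :=
      (lt_div_iff₀ (by positivity : (0:ℝ) < 2 * (M + 1))).mp hε2
    nlinarith
  show 0 < Delta n p c (h0 - ε) 0
  simp only [Delta, zero_add]
  have hc0 : c 0 = c h0 - p h0 * h0 := by linarith
  rw [hc0]
  have hQeq : p (((n:ℝ) - 1) * (h0 - ε)) = p Q := by rw [hQdef]
  rw [hQeq]
  have hx1 : 0 < K * (h0 / 2 - ε) := mul_pos hKpos (by linarith)
  have hx2 : 0 ≤ p h0 * ε := mul_nonneg hph0 (le_of_lt hε)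
  nlinarith [hpQval, hmvt, hεM, hx1, hx2]
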